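/- Let F be strongly monotone with modulus μ and Lipschitz with constant L, g proper lsc convex, λ ∈ (0, 2μ/L²), y(x) := prox_{λg}(x - λF(x)), and x* the unique fixed point of y. Then for X(x) := x - y(x) one has ⟨x - x*, X(x)⟩ ≥ (1-c)‖x - x*‖², where c = 1/√(1+2λμ-λ²L²) ∈ (0,1). In particular ⟨x - x*, X(x)⟩ > 0 for all x ≠ x*. -/

import Mathlib

open scoped RealInnerProductSpace

set_option maxHeartbeats 1000000 in
/-- Remark 6 of the paper: the residual vector field `X x = x - y x` satisfies
`⟪x - x*, X x⟫ ≥ (1 - c) ‖x - x*‖²`. -/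
theorem stmt_7 {n : ℕ} (F : EuclideanSpace ℝ (Fin n) → EuclideanSpace ℝ (Fin n))
    (g : EuclideanSpace ℝ (Fin n) → EReal) (μ L lam : ℝ) (hμ : 0 < μ) (hL : 0 < L)
    (hmono : ∀ x z, μ * ‖x - z‖ ^ 2 ≤ ⟪F x - F z, x - z⟫)
    (hlip : ∀ x z, ‖F x - F z‖ ≤ L * ‖x - z‖)
    (hproper : ∃ x, g x ≠ ⊤) (hnobot : ∀ x, g x ≠ ⊥)
    (hlsc : LowerSemicontinuous g)
    (hconv : ∀ x z : EuclideanSpace ℝ (Fin n), ∀ t : ℝ, 0 ≤ t → t ≤ 1 →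
      g (t • x + (1 - t) • z) ≤ (t : EReal) * g x + ((1 - t : ℝ) : EReal) * g z)
    (hlam : lam ∈ Set.Ioo 0 (2 * μ / L ^ 2))
    (y : EuclideanSpace ℝ (Fin n) → EuclideanSpace ℝ (Fin n))
    (hy : ∀ x z, (lam : EReal) * g (y x) + ((‖(x - lam • F x) - y x‖ ^ 2 / 2 : ℝ) : EReal) ≤
      (lam : EReal) * g z + ((‖(x - lam • F x) - z‖ ^ 2 / 2 : ℝ) : EReal))
    (xstar : EuclideanSpace ℝ (Fin n))
    (hfix : y xstar = xstar) (huniq : ∀ z, y z = z → z = xstar) :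
    (∀ x, (1 - 1 / Real.sqrt (1 + 2 * lam * μ - lam ^ 2 * L ^ 2)) * ‖x - xstar‖ ^ 2 ≤
        ⟪x - xstar, x - y x⟫) ∧
      ∀ x, x ≠ xstar → 0 < ⟪x - xstar, x - y x⟫ := by
  obtain ⟨hlam0, hlam2⟩ := hlam
  set a : ℝ := 2 * lam * μ - lam ^ 2 * L ^ 2 with ha
  have hlL : lam * L ^ 2 < 2 * μ := (lt_div_iff₀ (by positivity)).mp hlam2
  have ha0 : 0 < a := by nlinarith
  set c : ℝ := 1 / Real.sqrt (1 + 2 * lam * μ - lam ^ 2 * L ^ 2) with hc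
  have harg : 1 + 2 * lam * μ - lam ^ 2 * L ^ 2 = 1 + a := by ring
  have hs1 : 1 < Real.sqrt (1 + 2 * lam * μ - lam ^ 2 * L ^ 2) := by
    rw [harg]
    have := (Real.lt_sqrt (by norm_num : (0:ℝ) ≤ 1)).mpr (by nlinarith : (1:ℝ)^2 < 1 + a)
    exact this
  have hc0 : 0 < c := by rw [hc]; positivity
  have hc1 : c < 1 := by
    rw [hc, div_lt_one (by linarith)]; exact hs1
  have hc2 : c ^ 2 = 1 / (1 + a) := by
    rw [hc, div_pow, one_pow, Real.sq_sqrt (by rw [harg]; linarith)]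
    rw [harg]
  -- finiteness of g ∘ y
  have hfin : ∀ x, ∃ r : ℝ, g (y x) = (r : EReal) := by
    obtain ⟨x0, hx0⟩ := hproper
    obtain ⟨r0, hr0⟩ : ∃ r : ℝ, g x0 = (r : EReal) := by
      lift g x0 to ℝ using ⟨hx0, hnobot x0⟩ with r
      exact ⟨r, rfl⟩
    intro x
    by_cases ht : g (y x) = ⊤
    · exfalso
      have h := hy x x0
      rw [ht, hr0, EReal.coe_mul_top_of_pos hlam0, EReal.top_add_coe] at h
      have h2 : ((lam * r0 + ‖(x - lam • F x) - x0‖ ^ 2 / 2 : ℝ) : EReal) < ⊤ :=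
        EReal.coe_lt_top _
      rw [top_le_iff] at h
      rw [← h] at h2
      norm_cast at h2
      simp at h2
    · lift g (y x) to ℝ using ⟨ht, hnobot _⟩ with r
      exact ⟨r, rfl⟩
  -- firm nonexpansiveness
  have hfirm : ∀ x z, ‖y x - y z‖ ^ 2 ≤
      ⟪(x - lam • F x) - (z - lam • F z), y x - y z⟫ := by
    intro x z
    obtain ⟨gp, hgp⟩ := hfin x
    obtain ⟨gq, hgq⟩ := hfin z
    set p := y x with hp
    set q := y z with hq
    set w1 := x - lam • F x with hw1
    set w2 := z - lam • F z with hw2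
    have step : ∀ t : ℝ, 0 < t → t ≤ 1 →
        -(t * ‖p - q‖ ^ 2) ≤ ⟪w1 - p, p - q⟫ - ⟪w2 - q, p - q⟫ := by
      intro t ht0 ht1
      have hco1 := hconv q p t ht0.le ht1
      have hco2 := hconv p q t ht0.le ht1
      have h1 := (hy x (t • q + (1 - t) • p)).trans
        (add_le_add_left (mul_le_mul_of_nonneg_left hco1 (by exact_mod_cast hlam0.le : (0:EReal) ≤ (lam:EReal))) _)
      have h2 := (hy z (t • p + (1 - t) • q)).trans
        (add_le_add_left (mul_le_mul_of_nonneg_left hco2 (by exact_mod_cast hlam0.le : (0:EReal) ≤ (lam:EReal))) _)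
      rw [hgp, hgq] at h1 h2
      have h1' : lam * gp + ‖w1 - p‖ ^ 2 / 2 ≤
          lam * (t * gq + (1 - t) * gp) + ‖w1 - (t • q + (1 - t) • p)‖ ^ 2 / 2 := by
        exact_mod_cast h1
      have h2' : lam * gq + ‖w2 - q‖ ^ 2 / 2 ≤
          lam * (t * gp + (1 - t) * gq) + ‖w2 - (t • p + (1 - t) • q)‖ ^ 2 / 2 := by
        exact_mod_cast h2
      have e1 : w1 - (t • q + (1 - t) • p) = (w1 - p) - t • (q - p) := by module
      have e2 : w2 - (t • p + (1 - t) • q) = (w2 - q) - t • (p - q) := by module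
      have n1 : ‖(w1 - p) - t • (q - p)‖ ^ 2 =
          ‖w1 - p‖ ^ 2 - 2 * (t * ⟪w1 - p, q - p⟫) + t ^ 2 * ‖q - p‖ ^ 2 := by
        rw [norm_sub_sq_real, real_inner_smul_right, norm_smul, mul_pow, Real.norm_eq_abs,
          sq_abs]
      have n2 : ‖(w2 - q) - t • (p - q)‖ ^ 2 =
          ‖w2 - q‖ ^ 2 - 2 * (t * ⟪w2 - q, p - q⟫) + t ^ 2 * ‖p - q‖ ^ 2 := by
        rw [norm_sub_sq_real, real_inner_smul_right, norm_smul, mul_pow, Real.norm_eq_abs,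
          sq_abs]
      rw [e1, n1] at h1'
      rw [e2, n2] at h2'
      have hsym : ⟪w1 - p, q - p⟫ = -⟪w1 - p, p - q⟫ := by
        rw [← inner_neg_right, neg_sub]
      have hnn : ‖q - p‖ = ‖p - q‖ := norm_sub_rev _ _
      rw [hsym, hnn] at h1'
      have hmul : t * 0 ≤ t * ((⟪w1 - p, p - q⟫ - ⟪w2 - q, p - q⟫) + t * ‖p - q‖ ^ 2) := by
        nlinarith [h1', h2']
      have := le_of_mul_le_mul_left hmul ht0
      linarith
    have hA : 0 ≤ ⟪w1 - p, p - q⟫ - ⟪w2 - q, p - q⟫ := by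
      have hB : (0:ℝ) ≤ ‖p - q‖ ^ 2 := by positivity
      refine le_of_forall_pos_le_add ?_
      intro ε hε
      have ht0 : 0 < min 1 (ε / (‖p - q‖ ^ 2 + 1)) := lt_min one_pos (by positivity)
      have := step _ ht0 (min_le_left _ _)
      have ht2 : min 1 (ε / (‖p - q‖ ^ 2 + 1)) ≤ ε / (‖p - q‖ ^ 2 + 1) := min_le_right _ _
      have hkey : min 1 (ε / (‖p - q‖ ^ 2 + 1)) * ‖p - q‖ ^ 2 ≤ ε := by
        have h4 : ε / (‖p - q‖ ^ 2 + 1) * ‖p - q‖ ^ 2 ≤ ε := by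
          rw [div_mul_eq_mul_div, div_le_iff₀ (by positivity)]
          nlinarith
        nlinarith [mul_le_mul_of_nonneg_right ht2 hB]
      linarith
    have ew : w1 - w2 = ((w1 - p) - (w2 - q)) + (p - q) := by module
    have hval : ⟪w1 - w2, p - q⟫ =
        (⟪w1 - p, p - q⟫ - ⟪w2 - q, p - q⟫) + ‖p - q‖ ^ 2 := by
      rw [ew, inner_add_left, inner_sub_left, real_inner_self_eq_norm_sq]
    linarith [hval, hA]
  -- contraction
  have hcontr : ∀ x, ‖y x - xstar‖ ≤ c * ‖x - xstar‖ := by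
    intro x
    have hf := hfirm x xstar
    rw [hfix] at hf
    have ew : (x - lam • F x) - (xstar - lam • F xstar)
        = (x - xstar) - lam • (F x - F xstar) := by module
    rw [ew] at hf
    have hcs := real_inner_le_norm ((x - xstar) - lam • (F x - F xstar)) (y x - xstar)
    have h5 : ‖y x - xstar‖ ≤ ‖(x - xstar) - lam • (F x - F xstar)‖ := by
      nlinarith [hf, hcs, norm_nonneg (y x - xstar),
        norm_nonneg ((x - xstar) - lam • (F x - F xstar))]
    have hexp : ‖(x - xstar) - lam • (F x - F xstar)‖ ^ 2 =
        ‖x - xstar‖ ^ 2 - 2 * (lam * ⟪x - xstar, F x - F xstar⟫)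
          + lam ^ 2 * ‖F x - F xstar‖ ^ 2 := by
      rw [norm_sub_sq_real, real_inner_smul_right, norm_smul, mul_pow, Real.norm_eq_abs,
        sq_abs]
    have hm := hmono x xstar
    have hcomm : ⟪F x - F xstar, x - xstar⟫ = ⟪x - xstar, F x - F xstar⟫ :=
      real_inner_comm _ _
    rw [hcomm] at hm
    have hl := hlip x xstar
    have hl2 : ‖F x - F xstar‖ ^ 2 ≤ L ^ 2 * ‖x - xstar‖ ^ 2 := by
      nlinarith [norm_nonneg (F x - F xstar), norm_nonneg (x - xstar)]
    have hsq : ‖(x - xstar) - lam • (F x - F xstar)‖ ^ 2 ≤ (1 - a) * ‖x - xstar‖ ^ 2 := by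
      rw [hexp]; nlinarith [sq_nonneg lam, mul_le_mul_of_nonneg_left hl2 (sq_nonneg lam)]
    have hca : (1 - a) ≤ c ^ 2 := by
      rw [hc2, le_div_iff₀ (by linarith : (0:ℝ) < 1 + a)]
      nlinarith
    have hfinal : ‖y x - xstar‖ ^ 2 ≤ c ^ 2 * ‖x - xstar‖ ^ 2 := by
      have h6 : ‖y x - xstar‖ ^ 2 ≤ ‖(x - xstar) - lam • (F x - F xstar)‖ ^ 2 := by
        nlinarith [norm_nonneg (y x - xstar),
          norm_nonneg ((x - xstar) - lam • (F x - F xstar))]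
      nlinarith [sq_nonneg (‖x - xstar‖)]
    nlinarith [norm_nonneg (y x - xstar), norm_nonneg (x - xstar),
      mul_nonneg hc0.le (norm_nonneg (x - xstar))]
  have key : ∀ x, (1 - c) * ‖x - xstar‖ ^ 2 ≤ ⟪x - xstar, x - y x⟫ := by
    intro x
    have hin : ⟪x - xstar, x - y x⟫ =
        ‖x - xstar‖ ^ 2 - ⟪x - xstar, y x - xstar⟫ := by
      rw [show x - y x = (x - xstar) - (y x - xstar) by module, inner_sub_right,
        real_inner_self_eq_norm_sq]
    have hcs := real_inner_le_norm (x - xstar) (y x - xstar)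
    have h7 : ⟪x - xstar, y x - xstar⟫ ≤ ‖x - xstar‖ * (c * ‖x - xstar‖) :=
      hcs.trans (mul_le_mul_of_nonneg_left (hcontr x) (norm_nonneg _))
    rw [hin]
    nlinarith [h7]
  refine ⟨key, fun x hx => ?_⟩
  have hd : 0 < ‖x - xstar‖ := by
    rw [norm_pos_iff, sub_ne_zero]; exact hx
  have := key x
  nlinarith [this, mul_pos (by linarith : (0:ℝ) < 1 - c) (mul_pos hd hd)]
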